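/- Let H be a finite-dimensional Hopf algebra with pivotal element g, right integral \mu^r and left integral \mu^l = \mu^r \circ S. Then for all x, y in H: \mu^r(gxy) = \mu^r(gyx) and \mu^l(g^{-1}xy) = \mu^l(g^{-1}yx); i.e. the functionals \mu^r(g \cdot ?) and \mu^l(g^{-1} \cdot ?) are trace-like (symmetric linear forms). -/
import Mathlib


open scoped TensorProduct
open TensorProduct

variable {k A : Type} [Field k] [Ring A] [HopfAlgebra k A]

/-- Convolution product on the dual Hopf algebra `H* = O(H)`. -/
noncomputable def conv (φ ψ : Module.Dual k A) : Module.Dual k A :=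
  (LinearMap.mul' k k) ∘ₗ (TensorProduct.map φ ψ) ∘ₗ (Coalgebra.comul (R := k))

/-- With pivotal element `g` (`S² = g · g⁻¹`), right integral `μʳ`
(satisfying `μʳ(xy) = μʳ(S²(y)x)`) and left integral `μˡ = μʳ ∘ S` (satisfying
`μˡ(xy) = μˡ(S⁻²(y)x)`), the functionals `μʳ(g·?)` and `μˡ(g⁻¹·?)` are symmetric:
`μʳ(gxy) = μʳ(gyx)` and `μˡ(g⁻¹xy) = μˡ(g⁻¹yx)`. -/
theorem pivotal_integral_trace_like
    [FiniteDimensional k A]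
    (Sinv : A →ₗ[k] A)
    (hS1 : ∀ x : A, Sinv (HopfAlgebra.antipode (R := k) x) = x)
    (hS2 : ∀ x : A, HopfAlgebra.antipode (R := k) (Sinv x) = x)
    (g ginv : A)
    (hg : g * ginv = 1) (hg' : ginv * g = 1)
    (hgrouplike : Coalgebra.comul (R := k) g = g ⊗ₜ[k] g)
    (hpiv : ∀ x : A, HopfAlgebra.antipode (R := k) (HopfAlgebra.antipode (R := k) x)
        = g * x * ginv)
    (μr : Module.Dual k A)
    (hInt : ∀ φ : Module.Dual k A, conv μr φ = φ 1 • μr)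
    (μl : Module.Dual k A)
    (hμl : μl = μr ∘ₗ HopfAlgebra.antipode (R := k))
    (hr : ∀ x y : A,
      μr (x * y) = μr (HopfAlgebra.antipode (R := k) (HopfAlgebra.antipode (R := k) y) * x))
    (hl : ∀ x y : A, μl (x * y) = μl (Sinv (Sinv y) * x)) :
    ∀ x y : A, μr (g * (x * y)) = μr (g * (y * x))
      ∧ μl (ginv * (x * y)) = μl (ginv * (y * x)) := by
  have hSinv2 : ∀ z : A, Sinv (Sinv z) = ginv * z * g := by
    intro z
    have h1 : HopfAlgebra.antipode (R := k) (HopfAlgebra.antipode (R := k) (ginv * z * g)) = z := by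
      rw [hpiv, ← mul_assoc, ← mul_assoc, hg, one_mul, mul_assoc, hg, mul_one]
    calc Sinv (Sinv z)
        = Sinv (Sinv (HopfAlgebra.antipode (R := k)
            (HopfAlgebra.antipode (R := k) (ginv * z * g)))) := by rw [h1]
      _ = ginv * z * g := by rw [hS1, hS1]
  intro x y
  constructor
  · calc μr (g * (x * y)) = μr ((g * x) * y) := by rw [mul_assoc]
      _ = μr (HopfAlgebra.antipode (R := k) (HopfAlgebra.antipode (R := k) y) * (g * x)) :=
          hr _ _
      _ = μr (g * (y * x)) := by
          rw [hpiv]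
          congr 1
          rw [mul_assoc, ← mul_assoc ginv, hg', one_mul, ← mul_assoc, mul_assoc]
  · calc μl (ginv * (x * y)) = μl ((ginv * x) * y) := by rw [mul_assoc]
      _ = μl (Sinv (Sinv y) * (ginv * x)) := hl _ _
      _ = μl (ginv * (y * x)) := by
          rw [hSinv2]
          congr 1
          rw [mul_assoc, ← mul_assoc g, hg, one_mul, ← mul_assoc, mul_assoc]
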